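/- Let r ∈ [1,3] and set r' = 3 + r(2/√3 - 1). Let c₁ ≈ be the point in the fourth quadrant satisfying x² + (y + 1/√3)² = 9 and x² + y² = r'², and let c₂ = (-(√3/2)·r', (1/2)·r'). Then the distance |c₁ c₂| is strictly greater than 6. In other words, two disks of radius 3 with centers c₁ and c₂ are disjoint. -/

import Mathlib

set_option maxHeartbeats 1000000

noncomputable def pt (x y : ℝ) : EuclideanSpace ℝ (Fin 2) := WithLp.toLp 2 ![x, y]

lemma dist_pt (a b c d : ℝ) :
    dist (pt a b) (pt c d) = Real.sqrt ((a - c) ^ 2 + (b - d) ^ 2) := by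
  rw [EuclideanSpace.dist_eq]
  congr 1
  simp [pt, Fin.sum_univ_two, Real.dist_eq, sq_abs]

lemma aux_cubic (s r' : ℝ)
    (hs3 : s ^ 2 = 3) (hsl : (1.732:ℝ) < s)
    (ha : (0:ℝ) ≤ r' ^ 2 - 9.94) (hb : (0:ℝ) ≤ 12 - r' ^ 2)
    (hu : 2 * s + 2 ≤ s * r') :
    0 < 3 * r' ^ 2 * r' ^ 2 - r' ^ 2 * (26 - 3 * r' ^ 2) ^ 2 / 3
      - (36 - 2 * r' ^ 2) ^ 2
      + (36 - 2 * r' ^ 2) * (3 * r' ^ 2 - 26) * (s * r') / 3 := by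
  have hc1 : (0:ℝ) ≤ (36 - 2 * r' ^ 2) * (3 * r' ^ 2 - 26) := by nlinarith
  have hc2 : (0:ℝ) ≤ (36 - 2 * r' ^ 2) * (3 * r' ^ 2 - 26) * (s * r' - (2 * s + 2)) :=
    mul_nonneg hc1 (by linarith)
  have hc3 : (0:ℝ) ≤ (36 - 2 * r' ^ 2) * (3 * r' ^ 2 - 26) * (s - 1.732) :=
    mul_nonneg hc1 (by linarith)
  nlinarith [hc2, hc3, mul_nonneg ha hb, mul_nonneg (mul_nonneg ha hb) ha,
    mul_nonneg (mul_nonneg ha hb) hb]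

lemma aux_sq (a b : ℝ) (ha : 0 < a) (h : b ^ 2 < a ^ 2) : b < a := by nlinarith

theorem stmt_5 (r x y : ℝ) (hr1 : 1 ≤ r) (hr3 : r ≤ 3)
    (r' : ℝ) (hr' : r' = 3 + r * (2 / Real.sqrt 3 - 1))
    (hx : x > 0) (hy : y < 0)
    (h1 : x ^ 2 + (y + 1 / Real.sqrt 3) ^ 2 = 9)
    (h2 : x ^ 2 + y ^ 2 = r' ^ 2) :
    dist (pt x y) (pt (-(Real.sqrt 3 / 2) * r') (r' / 2)) > 6 := by
  rw [dist_pt]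
  set s := Real.sqrt 3 with hsdef
  have hs3 : s ^ 2 = 3 := Real.sq_sqrt (by norm_num)
  have hs0 : 0 < s := Real.sqrt_pos.mpr (by norm_num)
  have hsl : (1.732 : ℝ) < s := by nlinarith
  have hsu : s < 1.7321 := by nlinarith
  have hinv : (1 : ℝ) / s = s / 3 := by field_simp; nlinarith
  rw [hinv] at h1
  have hkey : 2 * s * y = 26 - 3 * r' ^ 2 := by nlinarith [h1, h2]
  have h23 : (2 : ℝ) / s = 2 * s / 3 := by field_simp; nlinarith
  rw [h23] at hr'
  have hrl : 2 + 2 * s / 3 ≤ r' := by rw [hr']; nlinarith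
  have hru : r' ≤ 2 * s := by rw [hr']; nlinarith
  have hrp : 0 < r' := by nlinarith
  have ha : (0:ℝ) ≤ r' ^ 2 - 9.94 := by
    nlinarith [sq_nonneg (r' - (2 + 2 * s / 3)), hs3, hsl, hrl]
  have hb : (0:ℝ) ≤ 12 - r' ^ 2 := by nlinarith [hru, hrp, hs3]
  have hu : 2 * s + 2 ≤ s * r' := by
    nlinarith [mul_le_mul_of_nonneg_left hrl hs0.le, hs3]
  have h12 : 12 * y ^ 2 = (26 - 3 * r' ^ 2) ^ 2 := by
    linear_combination (2 * s * y + (26 - 3 * r' ^ 2)) * hkey - 4 * y ^ 2 * hs3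
  have hsy : 6 * (r' * y) = (26 - 3 * r' ^ 2) * (s * r') := by
    linear_combination (s * r') * hkey - 2 * r' * y * hs3
  have hq : 3 * r' ^ 2 * (r' ^ 2 - y ^ 2) - (36 - 2 * r' ^ 2 + r' * y) ^ 2 =
      3 * r' ^ 2 * r' ^ 2 - r' ^ 2 * (26 - 3 * r' ^ 2) ^ 2 / 3
      - (36 - 2 * r' ^ 2) ^ 2
      + (36 - 2 * r' ^ 2) * (3 * r' ^ 2 - 26) * (s * r') / 3 := by
    linear_combination (-(r' ^ 2) / 3) * h12
      - ((36 - 2 * r' ^ 2) / 3) * hsy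
  have hmain : (36 - 2 * r' ^ 2 + r' * y) ^ 2 < 3 * r' ^ 2 * (r' ^ 2 - y ^ 2) := by
    have := aux_cubic s r' hs3 hsl ha hb hu
    linarith [hq, this]
  have hB : 36 - 2 * r' ^ 2 + r' * y < s * r' * x := by
    have hsq : (s * r' * x) ^ 2 = 3 * r' ^ 2 * (r' ^ 2 - y ^ 2) := by
      have hx2 : x ^ 2 = r' ^ 2 - y ^ 2 := by linarith
      linear_combination r' ^ 2 * x ^ 2 * hs3 + 3 * r' ^ 2 * hx2
    exact aux_sq _ _ (by positivity) (by linarith [hmain, hsq])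
  have hexp : (x - -(s / 2) * r') ^ 2 + (y - r' / 2) ^ 2
      = 2 * r' ^ 2 + s * r' * x - r' * y := by
    linear_combination h2 + (r' ^ 2 / 4) * hs3
  rw [show (6:ℝ) = Real.sqrt 36 by
    rw [show (36:ℝ) = 6 ^ 2 by norm_num, Real.sqrt_sq]; norm_num]
  apply Real.sqrt_lt_sqrt (by norm_num)
  rw [hexp]
  linarith [hB]
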